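/- arXiv:2308.15257 — 3 statements merged into one kernel-verified Lean document; each statement's English description precedes it below -/
import Mathlib

section
/- Let S : [0,∞) → L(H) be a strongly continuous semigroup of bounded operators on a Hilbert space H such that ‖S(t)‖ ≤ C for all t ≥ 0 and ∫₀^∞ ‖S(t)y₀‖² dt ≤ C‖y₀‖² for all y₀ ∈ H, for some constant C ≥ 1. Then ‖S(t)‖ ≤ C²/√t for every t > 0. -/
open MeasureTheory Set

/-- a strongly continuous, uniformly bounded semigroup whose orbits are
uniformly square-integrable satisfies `‖S t‖ ≤ C²/√t` for `t > 0`. -/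
theorem semigroup_norm_decay
    {H : Type*} [NormedAddCommGroup H] [InnerProductSpace ℝ H] [CompleteSpace H]
    (S : ℝ → H →L[ℝ] H) (C : ℝ) (hC : 1 ≤ C)
    (hS0 : S 0 = ContinuousLinearMap.id ℝ H)
    (hsg : ∀ s t : ℝ, 0 ≤ s → 0 ≤ t → S (s + t) = (S s).comp (S t))
    (hcont : ∀ y : H, Continuous fun t => S t y)
    (hbd : ∀ t : ℝ, 0 ≤ t → ‖S t‖ ≤ C)
    (hint : ∀ y₀ : H, IntegrableOn (fun t => ‖S t y₀‖ ^ 2) (Ioi (0 : ℝ)))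
    (hL2 : ∀ y₀ : H, ∫ t in Ioi (0 : ℝ), ‖S t y₀‖ ^ 2 ≤ C * ‖y₀‖ ^ 2) :
    ∀ t : ℝ, 0 < t → ‖S t‖ ≤ C ^ 2 / Real.sqrt t := by
  intro t ht
  have hC0 : (0:ℝ) < C := lt_of_lt_of_le one_pos hC
  have hst : 0 < Real.sqrt t := Real.sqrt_pos.mpr ht
  apply ContinuousLinearMap.opNorm_le_bound
  · positivity
  intro y₀
  -- pointwise bound on Ioc 0 t
  have hpt : ∀ s ∈ Ioc (0:ℝ) t, ‖S t y₀‖ ^ 2 ≤ C ^ 2 * ‖S (t - s) y₀‖ ^ 2 := by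
    intro s hs
    have hs0 : 0 ≤ s := le_of_lt hs.1
    have hts : 0 ≤ t - s := sub_nonneg.mpr hs.2
    have hdec : S t = (S s).comp (S (t - s)) := by
      have := hsg s (t - s) hs0 hts
      rwa [add_sub_cancel] at this
    have h1 : ‖S t y₀‖ ≤ C * ‖S (t - s) y₀‖ := by
      rw [hdec]
      calc ‖(S s) ((S (t - s)) y₀)‖ ≤ ‖S s‖ * ‖S (t - s) y₀‖ :=
            (S s).le_opNorm _
        _ ≤ C * ‖S (t - s) y₀‖ := by
            exact mul_le_mul_of_nonneg_right (hbd s hs0) (norm_nonneg _)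
    calc ‖S t y₀‖ ^ 2 ≤ (C * ‖S (t - s) y₀‖) ^ 2 := by
          exact pow_le_pow_left₀ (norm_nonneg _) h1 2
      _ = C ^ 2 * ‖S (t - s) y₀‖ ^ 2 := by ring
  have hcont1 : Continuous fun s : ℝ => C ^ 2 * ‖S (t - s) y₀‖ ^ 2 := by
    have : Continuous fun s : ℝ => S (t - s) y₀ :=
      (hcont y₀).comp (continuous_const.sub continuous_id)
    continuity
  have hint1 : IntegrableOn (fun s : ℝ => C ^ 2 * ‖S (t - s) y₀‖ ^ 2) (Ioc 0 t) :=
    hcont1.integrableOn_Ioc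
  have hintc : IntegrableOn (fun _ : ℝ => ‖S t y₀‖ ^ 2) (Ioc 0 t) :=
    (integrableOn_const_iff (C := ‖S t y₀‖ ^ 2)).mpr (Or.inr (by simp [ht]))
  have key : t * ‖S t y₀‖ ^ 2 ≤ C ^ 3 * ‖y₀‖ ^ 2 := by
    have e1 : t * ‖S t y₀‖ ^ 2 = ∫ _ in Ioc (0:ℝ) t, ‖S t y₀‖ ^ 2 := by
      simp [Real.volume_Ioc, ht.le, smul_eq_mul, max_eq_left ht.le]
    have e2 : (∫ _ in Ioc (0:ℝ) t, ‖S t y₀‖ ^ 2) ≤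
        ∫ s in Ioc (0:ℝ) t, C ^ 2 * ‖S (t - s) y₀‖ ^ 2 :=
      setIntegral_mono_on hintc hint1 measurableSet_Ioc hpt
    have e3 : (∫ s in Ioc (0:ℝ) t, C ^ 2 * ‖S (t - s) y₀‖ ^ 2) =
        C ^ 2 * ∫ s in Ioc (0:ℝ) t, ‖S s y₀‖ ^ 2 := by
      rw [integral_const_mul]
      congr 1
      have := intervalIntegral.integral_comp_sub_left (a := (0:ℝ)) (b := t)
        (fun s => ‖S s y₀‖ ^ 2) t
      simpa [intervalIntegral.integral_of_le ht.le] using this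
    have e4 : (∫ s in Ioc (0:ℝ) t, ‖S s y₀‖ ^ 2) ≤ ∫ s in Ioi (0:ℝ), ‖S s y₀‖ ^ 2 := by
      apply setIntegral_mono_set (hint y₀)
      · filter_upwards with s using by positivity
      · exact HasSubset.Subset.eventuallyLE Ioc_subset_Ioi_self
    calc t * ‖S t y₀‖ ^ 2 ≤ C ^ 2 * ∫ s in Ioc (0:ℝ) t, ‖S s y₀‖ ^ 2 := by
          rw [e1]; rw [← e3] at *; exact e2
      _ ≤ C ^ 2 * (C * ‖y₀‖ ^ 2) := by
          apply mul_le_mul_of_nonneg_left _ (by positivity)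
          exact le_trans e4 (hL2 y₀)
      _ = C ^ 3 * ‖y₀‖ ^ 2 := by ring
  -- conclude
  have hsq : ‖S t y₀‖ ^ 2 ≤ (C ^ 2 / Real.sqrt t * ‖y₀‖) ^ 2 := by
    have hrhs : (C ^ 2 / Real.sqrt t * ‖y₀‖) ^ 2 = C ^ 4 * ‖y₀‖ ^ 2 / t := by
      rw [mul_pow, div_pow, Real.sq_sqrt ht.le]; ring
    rw [hrhs]
    rw [le_div_iff₀ ht]
    calc ‖S t y₀‖ ^ 2 * t = t * ‖S t y₀‖ ^ 2 := by ring
      _ ≤ C ^ 3 * ‖y₀‖ ^ 2 := key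
      _ ≤ C ^ 4 * ‖y₀‖ ^ 2 := by
          apply mul_le_mul_of_nonneg_right _ (by positivity)
          calc C ^ 3 = C ^ 3 * 1 := by ring
            _ ≤ C ^ 3 * C := by
                exact mul_le_mul_of_nonneg_left hC (by positivity)
            _ = C ^ 4 := by ring
  calc ‖S t y₀‖ = Real.sqrt (‖S t y₀‖ ^ 2) := by
        rw [Real.sqrt_sq (norm_nonneg _)]
    _ ≤ Real.sqrt ((C ^ 2 / Real.sqrt t * ‖y₀‖) ^ 2) := Real.sqrt_le_sqrt hsq
    _ = C ^ 2 / Real.sqrt t * ‖y₀‖ := Real.sqrt_sq (by positivity)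
end

section
/- Let μ > 0 and C > 0, and let y : [0,T] → H satisfy ‖y(t) - ȳ‖ ≤ C(e^{-μt} + e^{-μ(T-t)}) for all t ∈ (0,T), where ȳ ∈ H is fixed (H a normed space) and y is integrable. Then ‖(1/T)∫₀^T y(t) dt − ȳ‖ ≤ 2C(1 − e^{-μT})/(μT). -/
open MeasureTheory intervalIntegral

/-- uniform integral turnpike property — the time-average of an
exponentially turnpiked trajectory is within `2C(1-e^{-μT})/(μT)` of the turnpike. -/
theorem integral_turnpike
    {H : Type*} [NormedAddCommGroup H] [NormedSpace ℝ H] [CompleteSpace H]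
    (T C μ : ℝ) (hT : 0 < T) (hC : 0 ≤ C) (hμ : 0 < μ)
    (y : ℝ → H) (ybar : H)
    (hy_int : IntervalIntegrable y volume 0 T)
    (hturnpike : ∀ t ∈ Set.Ioo (0 : ℝ) T,
      ‖y t - ybar‖ ≤ C * (Real.exp (-μ * t) + Real.exp (-μ * (T - t)))) :
    ‖(1 / T) • (∫ t in (0 : ℝ)..T, y t) - ybar‖
      ≤ 2 * C * (1 - Real.exp (-μ * T)) / (μ * T) := by
  have hconst : IntervalIntegrable (fun _ : ℝ => ybar) volume 0 T :=
    intervalIntegrable_const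
  have key : (1 / T) • (∫ t in (0:ℝ)..T, y t) - ybar
      = (1 / T) • (∫ t in (0:ℝ)..T, (y t - ybar)) := by
    rw [intervalIntegral.integral_sub hy_int hconst, intervalIntegral.integral_const,
      smul_sub, sub_zero, smul_smul]
    congr 1
    field_simp
    simp
  -- the bounding function
  set g : ℝ → ℝ := fun t => C * (Real.exp (-μ * t) + Real.exp (-μ * (T - t))) with hg
  have hg_int : IntervalIntegrable g volume 0 T := by
    apply Continuous.intervalIntegrable
    fun_prop
  -- value of ∫ g
  have h1 : (∫ t in (0:ℝ)..T, Real.exp (-μ * t)) = (1 - Real.exp (-μ * T)) / μ := by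
    have := intervalIntegral.integral_comp_mul_left (fun x => Real.exp x) (c := -μ)
      (a := (0:ℝ)) (b := T)
    simp only [mul_zero] at this
    rw [this (neg_ne_zero.mpr hμ.ne'), integral_exp, Real.exp_zero, smul_eq_mul]
    field_simp [hμ.ne']
    ring
  have h2 : (∫ t in (0:ℝ)..T, Real.exp (-μ * (T - t))) = (1 - Real.exp (-μ * T)) / μ := by
    have := intervalIntegral.integral_comp_sub_left (fun s => Real.exp (-μ * s)) (a := (0:ℝ))
      (b := T) T
    simp only [sub_zero, sub_self] at this
    rw [this]
    exact h1
  have hg_val : (∫ t in (0:ℝ)..T, g t) = 2 * C * (1 - Real.exp (-μ * T)) / μ := by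
    simp only [hg]
    rw [intervalIntegral.integral_const_mul, intervalIntegral.integral_add
      (by apply Continuous.intervalIntegrable; fun_prop)
      (by apply Continuous.intervalIntegrable; fun_prop), h1, h2]
    ring
  have hbound : ‖∫ t in (0:ℝ)..T, (y t - ybar)‖ ≤ ∫ t in (0:ℝ)..T, g t := by
    have hgnn : 0 ≤ ∫ t in (0:ℝ)..T, g t := by
      rw [hg_val]
      have he : Real.exp (-μ * T) ≤ 1 := Real.exp_le_one_iff.mpr (by nlinarith)
      have : 0 ≤ 1 - Real.exp (-μ * T) := by linarith
      positivity
    refine (intervalIntegral.norm_integral_le_abs_of_norm_le ?_ hg_int).trans (le_of_eq (abs_of_nonneg hgnn))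
    rw [Set.uIoc_of_le hT.le]
    have hsub : Set.Ioo (0:ℝ) T =ᵐ[volume.restrict (Set.Ioc 0 T)] Set.Ioc (0:ℝ) T := by
      rw [Filter.eventuallyEq_set]
      have : (volume.restrict (Set.Ioc (0:ℝ) T)) {T} = 0 := by
        simp [Measure.restrict_apply, measurableSet_singleton]
      filter_upwards [measure_eq_zero_iff_ae_notMem.mp this] with t ht
      constructor
      · exact fun h => h.2.le.lt_of_ne' (by rintro rfl; exact ht rfl) |>.le |> fun h2 => ⟨h.1, h2⟩
      · exact fun h => ⟨h.1, h.2.lt_of_ne (by rintro rfl; exact ht rfl)⟩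
    have hae : ∀ᵐ t ∂(volume.restrict (Set.Ioc (0:ℝ) T)), t ∈ Set.Ioo (0:ℝ) T := by
      have := ae_restrict_mem (μ := volume) (measurableSet_Ioc (a := (0:ℝ)) (b := T))
      filter_upwards [this, hsub.mem_iff] with t h1' h2'
      exact h2'.mpr h1'
    filter_upwards [hae] with t ht
    exact hturnpike t ht
  calc ‖(1 / T) • (∫ t in (0:ℝ)..T, y t) - ybar‖
      = |1/T| * ‖∫ t in (0:ℝ)..T, (y t - ybar)‖ := by rw [key, norm_smul, Real.norm_eq_abs]
    _ ≤ (1/T) * (2 * C * (1 - Real.exp (-μ * T)) / μ) := by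
        rw [abs_of_pos (by positivity), ← hg_val]
        exact mul_le_mul_of_nonneg_left hbound (by positivity)
    _ = 2 * C * (1 - Real.exp (-μ * T)) / (μ * T) := by
        rw [one_div, inv_mul_eq_div, div_div, mul_comm μ T]
end

section
/- Let μ > 0, C₂ ≥ 1, C₀ ≥ 0 and let z : [0,T] → H (H a Banach space) be continuous and satisfy ‖z(t)‖ ≤ C₂ R e^{-μt} + C₂ C₃ e^{-μ(T-t)} + C₀ C₂ ∫₀^t e^{-μ(t-s)} e^{-μ(T-s)} ‖z(s)‖ ds for all t ∈ [0,T], where R, C₃ ≥ 0. Then there is a constant C₄ depending only on C₀, C₂, C₃, μ (not on T, R) with ‖z(t)‖ ≤ C₄ (R e^{-μt} + C₃ e^{-μ(T-t)}) for all t ∈ [0,T]. -/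
open Set MeasureTheory intervalIntegral

/-- the forward integral inequality satisfied by `z = y − ȳ` in the
proof of the main turnpike theorem implies a turnpike bound with a constant `C₄`
depending only on `C₀, C₂, C₃, μ` (in particular independent of `T` and `R`). -/
theorem turnpike_closing_estimate
    {H : Type*} [NormedAddCommGroup H] [NormedSpace ℝ H]
    (μ C₀ C₂ C₃ : ℝ) (hμ : 0 < μ) (hC₂ : 1 ≤ C₂) (hC₀ : 0 ≤ C₀) (hC₃ : 0 ≤ C₃) :
    ∃ C₄ : ℝ, 0 < C₄ ∧
      ∀ (T R : ℝ), 0 ≤ T → 0 ≤ R →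
      ∀ z : ℝ → H, ContinuousOn z (Set.Icc 0 T) →
      (∀ t ∈ Set.Icc (0 : ℝ) T,
        ‖z t‖ ≤ C₂ * R * Real.exp (-μ * t) + C₂ * C₃ * Real.exp (-μ * (T - t)) +
          C₀ * C₂ * ∫ s in (0 : ℝ)..t,
            Real.exp (-μ * (t - s)) * Real.exp (-μ * (T - s)) * ‖z s‖) →
      ∀ t ∈ Set.Icc (0 : ℝ) T,
        ‖z t‖ ≤ C₄ * (R * Real.exp (-μ * t) + C₃ * Real.exp (-μ * (T - t))) := by
  have hC₂0 : (0:ℝ) < C₂ := lt_of_lt_of_le one_pos hC₂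
  have hK : (0:ℝ) ≤ C₀ * C₂ ^ 2 / μ := div_nonneg (mul_nonneg hC₀ (by positivity)) hμ.le
  refine ⟨C₂ + Real.exp (C₀ * C₂ / μ) * (C₀ * C₂ ^ 2 / μ), by nlinarith [Real.exp_nonneg (C₀ * C₂ / μ)], ?_⟩
  intro T R hT hR z hz hineq t ht
  obtain ⟨ht0, htT⟩ := ht
  set b : ℝ → ℝ := fun s => C₀ * C₂ * Real.exp (-μ * (T - s)) with hb_def
  set q : ℝ → ℝ := fun s => b s * (Real.exp (μ * s) * ‖z s‖) with hq_def
  set u : ℝ → ℝ := fun r => ∫ s in (0:ℝ)..r, q s with hu_def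
  set B : ℝ → ℝ := fun r => C₀ * C₂ / μ * Real.exp (-μ * (T - r)) with hB_def
  set A : ℝ → ℝ := fun r => C₂ * R + C₂ * C₃ * Real.exp (μ * (2 * r - T)) with hA_def
  set M : ℝ → ℝ := fun r =>
    C₀ * C₂ ^ 2 / μ * (R * Real.exp (-μ * (T - r)) + C₃ / 3 * Real.exp (μ * (3 * r - 2 * T)))
    with hM_def
  set W : ℝ → ℝ := fun r => Real.exp (-(B r)) * u r - M r with hW_def
  -- basic positivity facts
  have hb_nonneg : ∀ s, 0 ≤ b s := fun s => by
    simp only [hb_def]; positivity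
  have hB_nonneg : ∀ r, 0 ≤ B r := fun r => by
    simp only [hB_def]; positivity
  have hB_le : ∀ r ∈ Icc (0:ℝ) T, B r ≤ C₀ * C₂ / μ := by
    intro r hr
    simp only [hB_def]
    have h1 : Real.exp (-μ * (T - r)) ≤ 1 := by
      rw [Real.exp_le_one_iff]; nlinarith [hr.2]
    nlinarith [div_nonneg (mul_nonneg hC₀ hC₂0.le) hμ.le]
  have hA_nonneg : ∀ r, 0 ≤ A r := fun r => by
    simp only [hA_def]; positivity
  have hM_nonneg : ∀ r, 0 ≤ M r := fun r => by
    simp only [hM_def]; positivity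
  -- continuity and integrability of q
  have hq_cont : ContinuousOn q (Icc 0 T) := by
    apply ContinuousOn.mul
    · exact (by fun_prop : Continuous b).continuousOn
    · exact ((by fun_prop : Continuous fun s : ℝ => Real.exp (μ * s)).continuousOn).mul hz.norm
  have hq_int : ∀ r ∈ Icc (0:ℝ) T, IntervalIntegrable q MeasureTheory.volume 0 r := by
    intro r hr
    apply ContinuousOn.intervalIntegrable
    rw [uIcc_of_le hr.1]
    exact hq_cont.mono (Icc_subset_Icc le_rfl hr.2)
  have hu0 : u 0 = 0 := by simp [hu_def]
  -- the hypothesis, rewritten in terms of u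
  have hg' : ∀ r ∈ Icc (0:ℝ) T,
      ‖z r‖ ≤ C₂ * R * Real.exp (-μ * r) + C₂ * C₃ * Real.exp (-μ * (T - r)) +
        Real.exp (-(μ * r)) * u r := by
    intro r hr
    have key : C₀ * C₂ * (∫ s in (0:ℝ)..r,
        Real.exp (-μ * (r - s)) * Real.exp (-μ * (T - s)) * ‖z s‖) =
        Real.exp (-(μ * r)) * u r := by
      simp only [hu_def]
      rw [← intervalIntegral.integral_const_mul, ← intervalIntegral.integral_const_mul]
      congr 1
      funext s
      simp only [hq_def, hb_def]
      rw [show -μ * (r - s) = μ * s + -(μ * r) by ring, Real.exp_add]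
      ring
    have h1 := hineq r hr
    rw [key] at h1
    exact h1
  -- multiplied through by exp (μ r)
  have hg : ∀ r ∈ Icc (0:ℝ) T, Real.exp (μ * r) * ‖z r‖ ≤ A r + u r := by
    intro r hr
    have h1 := mul_le_mul_of_nonneg_left (hg' r hr) (Real.exp_nonneg (μ * r))
    calc Real.exp (μ * r) * ‖z r‖ ≤ Real.exp (μ * r) *
          (C₂ * R * Real.exp (-μ * r) + C₂ * C₃ * Real.exp (-μ * (T - r)) +
            Real.exp (-(μ * r)) * u r) := h1
      _ = A r + u r := by
          simp only [hA_def]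
          rw [show -μ * (T - r) = μ * (2 * r - T) + -(μ * r) by ring,
            show -μ * r = -(μ * r) by ring, Real.exp_add]
          have hpos := Real.exp_pos (μ * r)
          rw [Real.exp_neg]
          field_simp
  -- derivative of W on the interior
  have hWderiv : ∀ r ∈ Ioo (0:ℝ) T,
      HasDerivAt W (Real.exp (-(B r)) * -(b r) * u r + Real.exp (-(B r)) * q r - b r * A r) r := by
    intro r hr
    have hu' : HasDerivAt u (q r) r := by
      apply intervalIntegral.integral_hasDerivAt_right (hq_int r (Ioo_subset_Icc_self hr))
      · exact ContinuousOn.stronglyMeasurableAtFilter isOpen_Ioo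
          (hq_cont.mono Ioo_subset_Icc_self) r hr
      · exact hq_cont.continuousAt (Icc_mem_nhds hr.1 hr.2)
    have hB' : HasDerivAt B (b r) r := by
      have h1 : HasDerivAt (fun x : ℝ => -μ * (T - x)) μ r := by
        have := ((hasDerivAt_id r).const_sub T).const_mul (-μ)
        exact this.congr_deriv (by ring)
      have h2 := (h1.exp).const_mul (C₀ * C₂ / μ)
      refine h2.congr_deriv ?_
      simp only [hb_def]
      field_simp
    have hM' : HasDerivAt M (b r * A r) r := by
      have h1 : HasDerivAt (fun x : ℝ => -μ * (T - x)) μ r := by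
        have := ((hasDerivAt_id r).const_sub T).const_mul (-μ)
        exact this.congr_deriv (by ring)
      have h2 : HasDerivAt (fun x : ℝ => μ * (3 * x - 2 * T)) (3 * μ) r := by
        have := (((hasDerivAt_id r).const_mul 3).sub_const (2 * T)).const_mul μ
        exact this.congr_deriv (by ring)
      have h3 := (((h1.exp).const_mul R).add ((h2.exp).const_mul (C₃ / 3))).const_mul
        (C₀ * C₂ ^ 2 / μ)
      refine h3.congr_deriv ?_
      simp only [hb_def, hA_def]
      rw [show μ * (3 * r - 2 * T) = -μ * (T - r) + μ * (2 * r - T) by ring, Real.exp_add]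
      field_simp
    exact ((hB'.neg.exp.mul hu').sub hM')
  -- the derivative is nonpositive
  have hWderiv_nonpos : ∀ r ∈ Ioo (0:ℝ) T,
      Real.exp (-(B r)) * -(b r) * u r + Real.exp (-(B r)) * q r - b r * A r ≤ 0 := by
    intro r hr
    have hgr := hg r (Ioo_subset_Icc_self hr)
    have hqle : q r ≤ b r * A r + b r * u r := by
      simp only [hq_def]
      nlinarith [hb_nonneg r, hgr]
    have hE1 : (0:ℝ) < Real.exp (-(B r)) := Real.exp_pos _
    have hE2 : Real.exp (-(B r)) ≤ 1 := by
      rw [Real.exp_le_one_iff]; linarith [hB_nonneg r]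
    have hbA : 0 ≤ b r * A r := mul_nonneg (hb_nonneg r) (hA_nonneg r)
    nlinarith [mul_le_mul_of_nonneg_left hqle hE1.le]
  -- W is antitone on [0, T]
  have hu_cont : ContinuousOn u (Icc 0 T) := by
    have := intervalIntegral.continuousOn_primitive_interval
      (f := q) (a := (0:ℝ)) (b := T) (μ := MeasureTheory.volume) ?_
    · rwa [uIcc_of_le hT] at this
    · rw [uIcc_of_le hT]
      exact hq_cont.integrableOn_Icc
  have hW_cont : ContinuousOn W (Icc 0 T) := by
    apply ContinuousOn.sub
    · exact ((by fun_prop : Continuous fun r => Real.exp (-(B r))).continuousOn).mul hu_cont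
    · exact (by fun_prop : Continuous M).continuousOn
  have hanti : AntitoneOn W (Icc 0 T) := by
    apply antitoneOn_of_deriv_nonpos (convex_Icc 0 T) hW_cont
    · intro r hr
      rw [interior_Icc] at hr
      exact ((hWderiv r hr).differentiableAt).differentiableWithinAt
    · intro r hr
      rw [interior_Icc] at hr
      rw [(hWderiv r hr).deriv]
      exact hWderiv_nonpos r hr
  have hWt : W t ≤ W 0 := hanti (left_mem_Icc.2 hT) ⟨ht0, htT⟩ ht0
  have hW0 : W 0 ≤ 0 := by
    simp only [hW_def, hu0, mul_zero, zero_sub, neg_nonpos]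
    exact hM_nonneg 0
  -- hence u t ≤ exp (C₀C₂/μ) * M t
  have hut : u t ≤ Real.exp (C₀ * C₂ / μ) * M t := by
    have h1 : Real.exp (-(B t)) * u t ≤ M t := by
      have := hWt.trans hW0
      simp only [hW_def] at this
      linarith
    have h2 : u t ≤ Real.exp (B t) * M t := by
      have h3 := mul_le_mul_of_nonneg_left h1 (Real.exp_nonneg (B t))
      rw [← mul_assoc, ← Real.exp_add] at h3
      simpa using h3
    have h4 : Real.exp (B t) ≤ Real.exp (C₀ * C₂ / μ) :=
      Real.exp_le_exp.mpr (hB_le t ⟨ht0, htT⟩)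
    exact h2.trans (mul_le_mul_of_nonneg_right h4 (hM_nonneg t))
  -- final assembly
  have hfin : Real.exp (-(μ * t)) * M t ≤
      C₀ * C₂ ^ 2 / μ * (R * Real.exp (-μ * t) + C₃ * Real.exp (-μ * (T - t))) := by
    simp only [hM_def]
    have e1 : Real.exp (-(μ * t)) * Real.exp (-μ * (T - t)) ≤ Real.exp (-μ * t) := by
      rw [← Real.exp_add]
      apply Real.exp_le_exp.mpr
      nlinarith
    have e2 : Real.exp (-(μ * t)) * Real.exp (μ * (3 * t - 2 * T)) ≤
        Real.exp (-μ * (T - t)) := by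
      rw [← Real.exp_add]
      apply Real.exp_le_exp.mpr
      nlinarith
    have p1 : (0:ℝ) < Real.exp (-(μ * t)) := Real.exp_pos _
    nlinarith [mul_le_mul_of_nonneg_left e1 (mul_nonneg hK hR),
      mul_le_mul_of_nonneg_left e2 (mul_nonneg hK hC₃),
      mul_nonneg (mul_nonneg hK hC₃) (Real.exp_nonneg (-μ * (T - t))),
      mul_nonneg (mul_nonneg hK hR) (Real.exp_nonneg (-μ * t))]
  have hmain := hg' t ⟨ht0, htT⟩
  have hstep : Real.exp (-(μ * t)) * u t ≤
      Real.exp (C₀ * C₂ / μ) *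
        (C₀ * C₂ ^ 2 / μ * (R * Real.exp (-μ * t) + C₃ * Real.exp (-μ * (T - t)))) := by
    have h5 := mul_le_mul_of_nonneg_left hut (Real.exp_nonneg (-(μ * t)))
    have h6 := mul_le_mul_of_nonneg_left hfin (Real.exp_nonneg (C₀ * C₂ / μ))
    calc Real.exp (-(μ * t)) * u t
        ≤ Real.exp (-(μ * t)) * (Real.exp (C₀ * C₂ / μ) * M t) := h5
      _ = Real.exp (C₀ * C₂ / μ) * (Real.exp (-(μ * t)) * M t) := by ring
      _ ≤ _ := h6
  nlinarith [hmain, hstep, Real.exp_nonneg (-μ * t), Real.exp_nonneg (-μ * (T - t))]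
end
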